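/- arXiv:2509.24720 — 5 statements merged into one kernel-verified Lean document; each statement's English description precedes it below -/
import Mathlib

section
/- Let ĉ(λ, β, T) be the unique solution of ĉ = 1 - (1/(λT)) ln(1 + λT(ĉ + βT/2)). If 0 < ĉ < 1, then ∂ĉ/∂β < 0, i.e., the implicitly defined root is strictly decreasing in the time-sensitivity parameter β. -/
/-- the implicit root ĉ(β) of ĉ = 1 - (1/(λT))ln(1 + λT(ĉ + βT/2)) is
strictly decreasing in β: if 0 < ĉ(β₀) < 1 then its derivative at β₀ is negative. -/
theorem stmt_1 (lam T : ℝ) (hlam : 0 < lam) (hT : 0 < T)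
    (c : ℝ → ℝ) (β₀ d : ℝ) (hβ₀ : 0 < β₀)
    (hroot : ∀ β > (0:ℝ),
      c β = 1 - (1 / (lam * T)) * Real.log (1 + lam * T * (c β + β * T / 2)))
    (hc0 : 0 < c β₀) (hc1 : c β₀ < 1)
    (hd : HasDerivAt c d β₀) : d < 0 := by
  set u₀ : ℝ := 1 + lam * T * (c β₀ + β₀ * T / 2) with hu₀
  clear_value u₀
  have hlT : 0 < lam * T := mul_pos hlam hT
  have hu₀pos : 0 < u₀ := by
    have h1 : 0 < c β₀ + β₀ * T / 2 := by positivity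
    have := mul_pos hlT h1
    linarith
  -- inner function
  have hg : HasDerivAt (fun β => 1 + lam * T * (c β + β * T / 2))
      (lam * T * (d + T / 2)) β₀ := by
    have h1 : HasDerivAt (fun β : ℝ => c β + β * T / 2) (d + T / 2) β₀ := by
      have := (hasDerivAt_id β₀).mul_const (T / 2)
      have h2 := hd.add this
      rw [one_mul] at h2
      refine h2.congr_of_eventuallyEq (Filter.Eventually.of_forall fun β => ?_)
      simp [mul_div_assoc]
    simpa using (h1.const_mul (lam * T)).const_add 1
  have hlog : HasDerivAt (fun β => Real.log (1 + lam * T * (c β + β * T / 2)))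
      (lam * T * (d + T / 2) / u₀) β₀ := by
    rw [hu₀]; exact hg.log (by rw [← hu₀]; exact ne_of_gt hu₀pos)
  set D : ℝ := d - 1 * (1 - (1 / (lam * T)) * (lam * T * (d + T / 2) / u₀)) + 0
  have hF : HasDerivAt (fun β => c β -
      (1 - (1 / (lam * T)) * Real.log (1 + lam * T * (c β + β * T / 2))))
      (d - (0 - (1 / (lam * T)) * (lam * T * (d + T / 2) / u₀))) β₀ := by
    exact hd.sub ((hasDerivAt_const β₀ (1:ℝ)).sub (hlog.const_mul (1 / (lam * T))))
  have heq : (fun β => c β -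
      (1 - (1 / (lam * T)) * Real.log (1 + lam * T * (c β + β * T / 2))))
      =ᶠ[nhds β₀] fun _ => (0 : ℝ) := by
    filter_upwards [Ioi_mem_nhds hβ₀] with β hβ
    linarith [hroot β hβ]
  have hkey : d - (0 - (1 / (lam * T)) * (lam * T * (d + T / 2) / u₀)) = 0 := by
    have h1 := hF.congr_of_eventuallyEq heq.symm
    exact h1.unique (hasDerivAt_const β₀ 0)
  have hlTne : lam * T ≠ 0 := ne_of_gt hlT
  have h2 : d + (d + T / 2) / u₀ = 0 := by
    field_simp at hkey ⊢
    nlinarith [hkey]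
  have h3 : d * (u₀ + 1) = -(T / 2) := by
    field_simp at h2
    linear_combination h2 / 2
  by_contra hdn
  push_neg at hdn
  have : 0 ≤ d * (u₀ + 1) := mul_nonneg hdn (by linarith)
  linarith
end

section
/- Let ĉ(λ, β, T) be the unique solution of ĉ = 1 - (1/(λT)) ln(1 + λT(ĉ + βT/2)). If 0 < ĉ < 1, then ĉ is strictly increasing in λ, i.e., ∂ĉ/∂λ > 0. -/
/-- the implicit root ĉ(λ) of ĉ = 1 - (1/(λT))ln(1 + λT(ĉ + βT/2)) is
strictly increasing in λ: if 0 < ĉ(λ₀) < 1 then its derivative at λ₀ is positive. -/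
theorem stmt_2 (β T : ℝ) (hβ : 0 ≤ β) (hT : 0 < T)
    (c : ℝ → ℝ) (lam₀ d : ℝ) (hlam₀ : 0 < lam₀)
    (hroot : ∀ lam > (0:ℝ),
      c lam = 1 - (1 / (lam * T)) * Real.log (1 + lam * T * (c lam + β * T / 2)))
    (hc0 : 0 < c lam₀) (hc1 : c lam₀ < 1)
    (hd : HasDerivAt c d lam₀) : 0 < d := by
  set k := β * T / 2 with hk
  set c₀ := c lam₀ with hc₀
  set u := 1 + lam₀ * T * (c₀ + k) with hu
  have hk0 : 0 ≤ k := by positivity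
  have hu1 : 1 < u := by
    have : 0 < lam₀ * T * (c₀ + k) := by positivity
    linarith
  have hu0 : 0 < u := by linarith
  -- derivative of the inner affine-in-c function
  have h1 : HasDerivAt (fun lam : ℝ => lam * T) T lam₀ := by
    simpa using (hasDerivAt_id lam₀).mul_const T
  have hinner : HasDerivAt (fun lam => 1 + lam * T * (c lam + k))
      (T * (c₀ + k) + lam₀ * T * d) lam₀ := by
    have h2 : HasDerivAt (fun lam => c lam + k) d lam₀ := hd.add_const k
    have h3 := (h1.mul h2).const_add (1 : ℝ)
    exact h3
  have hlog : HasDerivAt (fun lam => Real.log (1 + lam * T * (c lam + k)))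
      ((T * (c₀ + k) + lam₀ * T * d) / u) lam₀ := by
    have := hinner.log (by
      show (1 : ℝ) + lam₀ * T * (c lam₀ + k) ≠ 0
      rw [← hc₀, ← hu]; exact ne_of_gt hu0)
    simpa [hu, hc₀] using this
  have hrhs : HasDerivAt (fun lam => lam * T * (1 - c lam))
      (T * (1 - c₀) - lam₀ * T * d) lam₀ := by
    have h2 : HasDerivAt (fun lam => 1 - c lam) (-d) lam₀ := hd.const_sub 1
    have h4 : HasDerivAt (fun lam => lam * T * (1 - c lam)) (T * (1 - c lam₀) + lam₀ * T * -d) lam₀ := h1.mul h2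
    convert h4 using 1
    ring
  have hH : HasDerivAt
      (fun lam => Real.log (1 + lam * T * (c lam + k)) - lam * T * (1 - c lam))
      ((T * (c₀ + k) + lam₀ * T * d) / u - (T * (1 - c₀) - lam₀ * T * d)) lam₀ :=
    hlog.sub hrhs
  -- the function is identically 0 on a neighborhood of lam₀
  have hev : (fun lam => Real.log (1 + lam * T * (c lam + k)) - lam * T * (1 - c lam))
      =ᶠ[nhds lam₀] (fun _ => (0:ℝ)) := by
    filter_upwards [eventually_gt_nhds hlam₀] with lam hl
    have h := hroot lam hl
    have hne : lam * T ≠ 0 := (mul_pos hl hT).ne'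
    have hlogeq : Real.log (1 + lam * T * (c lam + k)) = lam * T * (1 - c lam) := by
      field_simp at h
      linarith
    simp [hlogeq]
  have hzero : (T * (c₀ + k) + lam₀ * T * d) / u - (T * (1 - c₀) - lam₀ * T * d) = 0 :=
    hH.unique ((hasDerivAt_const lam₀ (0:ℝ)).congr_of_eventuallyEq hev)
  have hA : T * (c₀ + k) + lam₀ * T * d = u * (T * (1 - c₀) - lam₀ * T * d) := by
    have h := hzero
    field_simp at h
    linarith
  -- the root identity at lam₀ : log u = lam₀ T (1 - c₀)
  have hlogu : Real.log u = lam₀ * T * (1 - c₀) := by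
    have h := hroot lam₀ hlam₀
    have hne : lam₀ * T ≠ 0 := (mul_pos hlam₀ hT).ne'
    rw [hu]
    field_simp at h
    linarith
  -- key inequality: u log u > u - 1 for u > 1
  have hineq : u - 1 < u * Real.log u := by
    have hlt := Real.log_lt_sub_one_of_pos (inv_pos.mpr hu0) (by
      intro h
      have : u = 1 := by
        field_simp at h
        linarith
      linarith)
    rw [Real.log_inv] at hlt
    have huu : u * u⁻¹ = 1 := mul_inv_cancel₀ (ne_of_gt hu0)
    nlinarith [mul_lt_mul_of_pos_left hlt hu0, huu]
  have e1 : lam₀ * T * (c₀ + k) = u - 1 := by rw [hu]; ring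
  have e2 : lam₀ * (lam₀ * T * d * (1 + u)) = u * (lam₀ * T * (1 - c₀)) - lam₀ * T * (c₀ + k) := by
    linear_combination lam₀ * hA
  rw [← hlogu, e1] at e2
  have hpos : 0 < lam₀ * (lam₀ * T * d * (1 + u)) := by rw [e2]; linarith
  have hcoef : 0 < lam₀ * (lam₀ * T * (1 + u)) := by positivity
  have hre : lam₀ * (lam₀ * T * d * (1 + u)) = (lam₀ * (lam₀ * T * (1 + u))) * d := by ring
  rw [hre] at hpos
  by_contra hdn
  push_neg at hdn
  nlinarith [hcoef, hpos]
end

section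
/- Let p : [0,T] → ℝ be differentiable and non-increasing, λ > 0, β ≥ 0. If p satisfies the Euler–Lagrange equation for the Lagrangian L(t, p, p') = (p' - β) e^{-λt(1-p)}, namely ∂L/∂p - d/dt(∂L/∂p') = 0 on (0,T), then p(t) = 1 - βt on (0,T). -/
/-- if a differentiable non-increasing price schedule p satisfies the
Euler–Lagrange equation ∂L/∂p - d/dt(∂L/∂p') = 0 for L = (p' - β)e^{-λt(1-p)},
where ∂L/∂p = λt(p'-β)e^{-λt(1-p)} and ∂L/∂p' = e^{-λt(1-p)}, then p(t) = 1 - βt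
on (0,T). -/
theorem stmt_6 (lam β T : ℝ) (hlam : 0 < lam) (hβ : 0 ≤ β) (hT : 0 < T)
    (p p' D : ℝ → ℝ)
    (hderiv : ∀ t ∈ Set.Ioo (0:ℝ) T, HasDerivAt p (p' t) t)
    (hmono : AntitoneOn p (Set.Icc 0 T))
    (hD : ∀ t ∈ Set.Ioo (0:ℝ) T,
      HasDerivAt (fun s => Real.exp (-(lam * s * (1 - p s)))) (D t) t)
    (hEL : ∀ t ∈ Set.Ioo (0:ℝ) T,
      lam * t * (p' t - β) * Real.exp (-(lam * t * (1 - p t))) - D t = 0) :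
    ∀ t ∈ Set.Ioo (0:ℝ) T, p t = 1 - β * t := by
  intro t ht
  -- compute the derivative of the inner function
  have hinner : HasDerivAt (fun s => -(lam * s * (1 - p s)))
      (-(lam * (1 - p t)) + lam * t * p' t) t := by
    have h1 : HasDerivAt (fun s => lam * s) lam t := by
      simpa using (hasDerivAt_id t).const_mul lam
    have h2 : HasDerivAt (fun s => 1 - p s) (-(p' t)) t := by
      simpa using (hderiv t ht).const_sub 1
    have : HasDerivAt (fun s => -(lam * s * (1 - p s))) (-(lam * (1 - p t) + lam * t * -p' t)) t :=
      (h1.mul h2).neg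
    convert this using 1
    ring
  have hE : HasDerivAt (fun s => Real.exp (-(lam * s * (1 - p s))))
      (Real.exp (-(lam * t * (1 - p t))) * (-(lam * (1 - p t)) + lam * t * p' t)) t :=
    hinner.exp
  have hDval : D t = Real.exp (-(lam * t * (1 - p t))) * (-(lam * (1 - p t)) + lam * t * p' t) :=
    (hD t ht).unique hE
  have hEL' := hEL t ht
  rw [hDval] at hEL'
  have hexp : Real.exp (-(lam * t * (1 - p t))) ≠ 0 := Real.exp_ne_zero _
  have key : lam * t * (p' t - β) - (-(lam * (1 - p t)) + lam * t * p' t) = 0 := by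
    have : (lam * t * (p' t - β) - (-(lam * (1 - p t)) + lam * t * p' t)) *
        Real.exp (-(lam * t * (1 - p t))) = 0 := by linarith [hEL']
    rcases mul_eq_zero.mp this with h | h
    · exact h
    · exact absurd h hexp
  have hlam' : lam ≠ 0 := ne_of_gt hlam
  have : lam * (1 - p t - β * t) = 0 := by ring_nf; ring_nf at key; linarith
  have := (mul_eq_zero.mp this).resolve_left hlam'
  linarith
end

section
/- Let λ > 0, T > 0, β ≥ 0, and let U(c) = c(1 - e^{-λT(1-c)}) - β[(T/2)(1 - e^{-λT(1-c)}) + T e^{-λT(1-c)}] for c ∈ [0,1]. Let ĉ be the unique real root of F(c) = c - 1 + (1/(λT)) ln(1 + λT(c + βT/2)). Then U'(c) > 0 for c < ĉ and U'(c) < 0 for c > ĉ (within [0,1]), so the maximizer of U over [0,1] is ĉ if ĉ ∈ [0,1], is 0 if ĉ < 0, and is 1 if ĉ > 1. -/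
/-- with U the seller's utility under a constant price and ĉ the unique
root of F(c) = c - 1 + (1/(λT))ln(1 + λT(c + βT/2)), U' > 0 below ĉ and U' < 0 above ĉ
on [0,1]; hence the maximizer of U over [0,1] is ĉ if ĉ ∈ [0,1], 0 if ĉ < 0, and 1 if
ĉ > 1. -/
theorem stmt_10 (lam β T chat : ℝ) (hlam : 0 < lam) (hβ : 0 ≤ β) (hT : 0 < T)
    (hdom : 0 < 1 + lam * T * (chat + β * T / 2))
    (hroot : chat - 1 + (1 / (lam * T)) * Real.log (1 + lam * T * (chat + β * T / 2)) = 0)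
    (U : ℝ → ℝ)
    (hU : ∀ c, U c = c * (1 - Real.exp (-(lam * T * (1 - c)))) -
      β * ((T / 2) * (1 - Real.exp (-(lam * T * (1 - c)))) +
        T * Real.exp (-(lam * T * (1 - c))))) :
    (∀ c ∈ Set.Icc (0:ℝ) 1, c < chat → 0 < deriv U c) ∧
    (∀ c ∈ Set.Icc (0:ℝ) 1, chat < c → deriv U c < 0) ∧
    (chat ∈ Set.Icc (0:ℝ) 1 → IsMaxOn U (Set.Icc (0:ℝ) 1) chat) ∧
    (chat < 0 → IsMaxOn U (Set.Icc (0:ℝ) 1) 0) ∧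
    (1 < chat → IsMaxOn U (Set.Icc (0:ℝ) 1) 1) := by
  have hUf : U = fun c => c * (1 - Real.exp (-(lam * T * (1 - c)))) -
      β * ((T / 2) * (1 - Real.exp (-(lam * T * (1 - c)))) +
        T * Real.exp (-(lam * T * (1 - c)))) := funext hU
  have hlT : 0 < lam * T := mul_pos hlam hT
  -- derivative formula
  have hder : ∀ c : ℝ, HasDerivAt U
      (1 - (1 + lam * T * (c + β * T / 2)) * Real.exp (-(lam * T * (1 - c)))) c := by
    intro c
    rw [hUf]
    have h1 : HasDerivAt (fun x : ℝ => -(lam * T * (1 - x))) (lam * T) c := by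
      have h := (((hasDerivAt_id c).const_sub 1).const_mul (lam * T)).neg
      refine h.congr_deriv ?_
      ring
    have hE := h1.exp
    have h2 : HasDerivAt (fun x : ℝ => 1 - Real.exp (-(lam * T * (1 - x))))
        (-(Real.exp (-(lam * T * (1 - c))) * (lam * T))) c := hE.const_sub 1
    have h3 := (hasDerivAt_id c).mul h2
    have h4 := ((h2.const_mul (T / 2)).add (hE.const_mul T)).const_mul β
    have h5 := h3.sub h4
    refine h5.congr_deriv ?_
    simp only [id_eq]
    ring
  have hcont : Continuous U := by
    rw [hUf]; continuity
  have harg : ∀ c : ℝ, 0 ≤ c → 0 < 1 + lam * T * (c + β * T / 2) := by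
    intro c hc
    have h1 : 0 ≤ c + β * T / 2 := by nlinarith
    nlinarith
  -- sign of the derivative
  have key_pos : ∀ c : ℝ, 0 ≤ c → c < chat →
      0 < 1 - (1 + lam * T * (c + β * T / 2)) * Real.exp (-(lam * T * (1 - c))) := by
    intro c hc hlt
    have hA : 0 < 1 + lam * T * (c + β * T / 2) := harg c hc
    have hlog : Real.log (1 + lam * T * (c + β * T / 2)) <
        Real.log (1 + lam * T * (chat + β * T / 2)) :=
      Real.log_lt_log hA (by nlinarith)
    have hF : c - 1 + (1 / (lam * T)) * Real.log (1 + lam * T * (c + β * T / 2)) < 0 := by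
      have hm : (1 / (lam * T)) * Real.log (1 + lam * T * (c + β * T / 2)) <
          (1 / (lam * T)) * Real.log (1 + lam * T * (chat + β * T / 2)) :=
        mul_lt_mul_of_pos_left hlog (by positivity)
      linarith
    have h6 : Real.log (1 + lam * T * (c + β * T / 2)) < lam * T * (1 - c) := by
      have h7 : (1 / (lam * T)) * Real.log (1 + lam * T * (c + β * T / 2)) < 1 - c := by
        linarith
      calc Real.log (1 + lam * T * (c + β * T / 2))
          = lam * T * ((1 / (lam * T)) * Real.log (1 + lam * T * (c + β * T / 2))) := by
            field_simp
        _ < lam * T * (1 - c) := mul_lt_mul_of_pos_left h7 hlT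
    have h8 : 1 + lam * T * (c + β * T / 2) < Real.exp (lam * T * (1 - c)) := by
      rw [← Real.exp_log hA]
      exact Real.exp_lt_exp.mpr h6
    have hEp : 0 < Real.exp (-(lam * T * (1 - c))) := Real.exp_pos _
    have h9 : (1 + lam * T * (c + β * T / 2)) * Real.exp (-(lam * T * (1 - c))) <
        Real.exp (lam * T * (1 - c)) * Real.exp (-(lam * T * (1 - c))) :=
      mul_lt_mul_of_pos_right h8 hEp
    rw [← Real.exp_add, add_neg_cancel, Real.exp_zero] at h9
    linarith
  have key_neg : ∀ c : ℝ, 0 ≤ c → chat < c →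
      1 - (1 + lam * T * (c + β * T / 2)) * Real.exp (-(lam * T * (1 - c))) < 0 := by
    intro c hc hlt
    have hA : 0 < 1 + lam * T * (c + β * T / 2) := harg c hc
    have hlog : Real.log (1 + lam * T * (chat + β * T / 2)) <
        Real.log (1 + lam * T * (c + β * T / 2)) :=
      Real.log_lt_log hdom (by nlinarith)
    have hF : 0 < c - 1 + (1 / (lam * T)) * Real.log (1 + lam * T * (c + β * T / 2)) := by
      have hm : (1 / (lam * T)) * Real.log (1 + lam * T * (chat + β * T / 2)) <
          (1 / (lam * T)) * Real.log (1 + lam * T * (c + β * T / 2)) :=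
        mul_lt_mul_of_pos_left hlog (by positivity)
      linarith
    have h6 : lam * T * (1 - c) < Real.log (1 + lam * T * (c + β * T / 2)) := by
      have h7 : 1 - c < (1 / (lam * T)) * Real.log (1 + lam * T * (c + β * T / 2)) := by
        linarith
      calc lam * T * (1 - c)
          < lam * T * ((1 / (lam * T)) * Real.log (1 + lam * T * (c + β * T / 2))) :=
            mul_lt_mul_of_pos_left h7 hlT
        _ = Real.log (1 + lam * T * (c + β * T / 2)) := by field_simp
    have h8 : Real.exp (lam * T * (1 - c)) < 1 + lam * T * (c + β * T / 2) := by
      rw [← Real.exp_log hA]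
      exact Real.exp_lt_exp.mpr h6
    have hEp : 0 < Real.exp (-(lam * T * (1 - c))) := Real.exp_pos _
    have h9 : Real.exp (lam * T * (1 - c)) * Real.exp (-(lam * T * (1 - c))) <
        (1 + lam * T * (c + β * T / 2)) * Real.exp (-(lam * T * (1 - c))) :=
      mul_lt_mul_of_pos_right h8 hEp
    rw [← Real.exp_add, add_neg_cancel, Real.exp_zero] at h9
    linarith
  refine ⟨?_, ?_, ?_, ?_, ?_⟩
  · intro c hc hlt
    rw [(hder c).deriv]
    exact key_pos c hc.1 hlt
  · intro c hc hlt
    rw [(hder c).deriv]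
    exact key_neg c hc.1 hlt
  · intro hchat
    rw [isMaxOn_iff]
    intro x hx
    rcases lt_trichotomy x chat with h | h | h
    · have hmono : StrictMonoOn U (Set.Icc 0 chat) := by
        apply strictMonoOn_of_deriv_pos (convex_Icc 0 chat) hcont.continuousOn
        intro y hy
        rw [interior_Icc] at hy
        rw [(hder y).deriv]
        exact key_pos y hy.1.le hy.2
      exact (hmono ⟨hx.1, h.le⟩ ⟨hchat.1, le_refl _⟩ h).le
    · rw [h]
    · have hanti : StrictAntiOn U (Set.Icc chat 1) := by
        apply strictAntiOn_of_deriv_neg (convex_Icc chat 1) hcont.continuousOn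
        intro y hy
        rw [interior_Icc] at hy
        rw [(hder y).deriv]
        exact key_neg y (hchat.1.trans hy.1.le) hy.1
      exact (hanti ⟨le_refl _, hchat.2⟩ ⟨h.le, hx.2⟩ h).le
  · intro hchat
    rw [isMaxOn_iff]
    intro x hx
    rcases eq_or_lt_of_le hx.1 with h | h
    · rw [← h]
    · have hanti : StrictAntiOn U (Set.Icc 0 1) := by
        apply strictAntiOn_of_deriv_neg (convex_Icc 0 1) hcont.continuousOn
        intro y hy
        rw [interior_Icc] at hy
        rw [(hder y).deriv]
        exact key_neg y hy.1.le (hchat.trans hy.1)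
      exact (hanti ⟨le_refl _, zero_le_one⟩ hx h).le
  · intro hchat
    rw [isMaxOn_iff]
    intro x hx
    rcases eq_or_lt_of_le hx.2 with h | h
    · rw [h]
    · have hmono : StrictMonoOn U (Set.Icc 0 1) := by
        apply strictMonoOn_of_deriv_pos (convex_Icc 0 1) hcont.continuousOn
        intro y hy
        rw [interior_Icc] at hy
        rw [(hder y).deriv]
        exact key_pos y hy.1.le (hy.2.trans hchat)
      exact (hmono hx ⟨zero_le_one, le_refl _⟩ h).le
end

section
/- Let λ > 0, let p be differentiable, let w be right-differentiable at v with w'(v) ≠ 0 and 0 < v < 1, and suppose that the function τ ↦ (v - p(τ)) e^{-λτ(1 - w⁻¹(τ))}, where w⁻¹ is the (differentiable) inverse of w near w(v), has a stationary point at τ = w(v). Then λ(-1 + v + w(v)/w'(v))(v - p(w(v))) = p'(w(v)), equivalently w'(v) = λ w(v)(v - p(w(v))) / (λ(1-v)(v - p(w(v))) + p'(w(v))) when the denominator is nonzero. -/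
/-- first-order condition of the buyer's interim utility maximization.
If τ ↦ (v - p(τ))e^{-λτ(1 - w⁻¹(τ))} is stationary at τ = w(v), with w⁻¹ the
differentiable inverse of w near w(v), then
λ(-1 + v + w(v)/w'(v))(v - p(w(v))) = p'(w(v)), equivalently
w'(v) = λw(v)(v - p(w(v))) / (λ(1-v)(v - p(w(v))) + p'(w(v))) when the denominator
is nonzero. -/
theorem stmt_16 (lam v w' p'w : ℝ) (p w winv : ℝ → ℝ)
    (hlam : 0 < lam) (hv0 : 0 < v) (hv1 : v < 1) (hw' : w' ≠ 0)
    (hwd : HasDerivWithinAt w w' (Set.Ici v) v)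
    (hwinv : winv (w v) = v)
    (hwinvd : HasDerivAt winv (1 / w') (w v))
    (hp : HasDerivAt p p'w (w v))
    (hstat : HasDerivAt
      (fun τ => (v - p τ) * Real.exp (-(lam * τ * (1 - winv τ)))) 0 (w v)) :
    lam * (-1 + v + w v / w') * (v - p (w v)) = p'w ∧
    (lam * (1 - v) * (v - p (w v)) + p'w ≠ 0 →
      w' = lam * w v * (v - p (w v)) /
        (lam * (1 - v) * (v - p (w v)) + p'w)) := by
  have h1 : HasDerivAt (fun τ : ℝ => 1 - winv τ) (-(1 / w')) (w v) :=
    hwinvd.const_sub 1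
  have h2 : HasDerivAt (fun τ : ℝ => lam * τ) lam (w v) := by
    simpa using (hasDerivAt_id (w v)).const_mul lam
  have hg : HasDerivAt (fun τ : ℝ => lam * τ * (1 - winv τ))
      (lam * (1 - winv (w v)) + lam * w v * (-(1 / w'))) (w v) := h2.mul h1
  have hexp : HasDerivAt (fun τ : ℝ => Real.exp (-(lam * τ * (1 - winv τ))))
      (Real.exp (-(lam * w v * (1 - winv (w v)))) *
        (-(lam * (1 - winv (w v)) + lam * w v * (-(1 / w'))))) (w v) := by
    simpa [mul_comm] using hg.neg.exp
  have hA : HasDerivAt (fun τ : ℝ => v - p τ) (-p'w) (w v) := hp.const_sub v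
  have hf := hA.mul hexp
  have heq := hstat.unique hf
  set E := Real.exp (-(lam * w v * (1 - winv (w v)))) with hE
  have hEpos : 0 < E := Real.exp_pos _
  rw [hwinv] at heq
  -- heq : 0 = -p'w * E + (v - p (w v)) * (E * (-(lam*(1-v) + lam*w v*(-(1/w')))))
  have key : lam * (-1 + v + w v / w') * (v - p (w v)) = p'w := by
    have hE' : E ≠ 0 := ne_of_gt hEpos
    field_simp at heq ⊢
    nlinarith [heq, sq_nonneg E, mul_pos hEpos hEpos]
  refine ⟨key, fun hden => ?_⟩
  have : lam * (1 - v) * (v - p (w v)) + p'w = lam * (w v / w') * (v - p (w v)) := by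
    rw [← key]; ring
  rw [this] at hden ⊢
  have hnum : lam * (w v) * (v - p (w v)) ≠ 0 := by
    intro h0
    apply hden
    rw [div_eq_mul_inv]
    have : lam * (w v * w'⁻¹) * (v - p (w v)) = lam * w v * (v - p (w v)) * w'⁻¹ := by ring
    rw [this, h0, zero_mul]
  field_simp
  rw [div_self (by intro h; apply hnum; rw [mul_assoc, h, mul_zero])]
end
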